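/- Let m ≥ 1 and let μ_k^{(1)}, μ_k^{(2)}, α_k, α̃_k ∈ ℂ for k = 1,…,m. For each k set M_k = [[μ_k^{(1)}, α_k],[0, μ_k^{(2)}]] and M̃_k = [[μ_k^{(1)}, α̃_k],[0, μ_k^{(2)}]] (upper triangular 2×2 complex matrices with the same diagonal entries but possibly different upper-right entries). Then the m-tuples [M_1,…,M_m] and [M̃_1,…,M̃_m] are equivalent if and only if there exist λ ∈ ℂ \ {0} and ρ ∈ ℂ such that α_k = λ·α̃_k + ρ·(μ_k^{(1)} − μ_k^{(2)}) for every k = 1,…,m. -/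
import Mathlib


/-- Two `m`-tuples of upper triangular `2×2` matrices with the
same diagonals are simultaneously similar iff the upper-right entries are related
by `α_k = λ·α̃_k + ρ·(μ_k^{(1)} − μ_k^{(2)})`. -/
theorem stmt0 (m : ℕ) (hm : 1 ≤ m)
    (μ₁ μ₂ α α' : Fin m → ℂ)
    (M M' : Fin m → Matrix (Fin 2) (Fin 2) ℂ)
    (hM : ∀ k, M k = !![μ₁ k, α k; 0, μ₂ k])
    (hM' : ∀ k, M' k = !![μ₁ k, α' k; 0, μ₂ k]) :
    (∃ C : Matrix (Fin 2) (Fin 2) ℂ, IsUnit C ∧ ∀ k, M' k = C⁻¹ * M k * C) ↔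
      ∃ lam : ℂ, lam ≠ 0 ∧ ∃ ρ : ℂ, ∀ k, α k = lam * α' k + ρ * (μ₁ k - μ₂ k) := by
  constructor
  · rintro ⟨C, hC, h⟩
    have hdet : IsUnit C.det := (Matrix.isUnit_iff_isUnit_det C).mp hC
    have hdet' : C 0 0 * C 1 1 - C 0 1 * C 1 0 ≠ 0 := by
      have := hdet.ne_zero
      rwa [Matrix.det_fin_two] at this
    have hk : ∀ k, C * M' k = M k * C := by
      intro k
      rw [h k, ← Matrix.mul_assoc, ← Matrix.mul_assoc,
        Matrix.mul_nonsing_inv C hdet, Matrix.one_mul]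
    -- entry equations
    set a := C 0 0; set b := C 0 1; set c := C 1 0; set d := C 1 1
    have e00 : ∀ k, α k * c = 0 := by
      intro k
      have := congrFun (congrFun (hk k) 0) 0
      simp [hM, hM', Matrix.mul_apply, Fin.sum_univ_two] at this
      linear_combination -this
    have e10 : ∀ k, c * (μ₁ k - μ₂ k) = 0 := by
      intro k
      have := congrFun (congrFun (hk k) 1) 0
      simp [hM, hM', Matrix.mul_apply, Fin.sum_univ_two] at this
      linear_combination this
    have e11 : ∀ k, c * α' k = 0 := by
      intro k
      have := congrFun (congrFun (hk k) 1) 1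
      simp [hM, hM', Matrix.mul_apply, Fin.sum_univ_two] at this
      linear_combination this
    have e01 : ∀ k, α k * d = a * α' k - b * (μ₁ k - μ₂ k) := by
      intro k
      have := congrFun (congrFun (hk k) 0) 1
      simp [hM, hM', Matrix.mul_apply, Fin.sum_univ_two] at this
      linear_combination -this
    by_cases hc : c = 0
    · have ha : a ≠ 0 := by
        intro h0; apply hdet'; rw [h0, hc]; ring
      have hd : d ≠ 0 := by
        intro h0; apply hdet'; rw [h0, hc]; ring
      refine ⟨a / d, div_ne_zero ha hd, -b / d, fun k => ?_⟩
      have := e01 k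
      field_simp
      linear_combination this
    · refine ⟨1, one_ne_zero, 0, fun k => ?_⟩
      have h1 : α k = 0 := by
        have := e00 k
        rcases mul_eq_zero.mp this with h | h
        · exact h
        · exact absurd h hc
      have h2 : α' k = 0 := by
        have := e11 k
        rcases mul_eq_zero.mp this with h | h
        · exact absurd h hc
        · exact h
      rw [h1, h2]; ring
  · rintro ⟨lam, hlam, ρ, h⟩
    refine ⟨!![lam, -ρ; 0, 1], ?_, fun k => ?_⟩
    · rw [Matrix.isUnit_iff_isUnit_det, Matrix.det_fin_two_of]
      simpa using hlam
    · set C : Matrix (Fin 2) (Fin 2) ℂ := !![lam, -ρ; 0, 1] with hCdef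
      have hdet : IsUnit C.det := by
        rw [hCdef, Matrix.det_fin_two_of]; simpa using hlam
      have key : C * M' k = M k * C := by
        rw [hM, hM', hCdef]
        ext i j
        fin_cases i <;> fin_cases j <;>
          simp [Matrix.mul_apply, Fin.sum_univ_two] <;>
          first | linear_combination -(h k) | ring1
      calc M' k = C⁻¹ * (C * M' k) := by
            rw [← Matrix.mul_assoc, Matrix.nonsing_inv_mul C hdet, Matrix.one_mul]
        _ = C⁻¹ * M k * C := by rw [key, Matrix.mul_assoc]
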